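/- arXiv:2403.09697 — 10 statements merged into one kernel-verified Lean document; each statement's English description precedes it below -/
import Mathlib

section
/- Let q be an integer with q ≥ 2 and let z be a real number with 0 < z < π. Then the sequence of partial products n ↦ ∏_{k=0}^{n-1} (1/q) · tan(z·q^{-k}/2) · cot(z·q^{-k-1}/2) converges, as n → ∞, to 2·tan(z/2)/z. -/
open Real Finset Filter Topology

theorem tan_infinite_product (q : ℤ) (hq : 2 ≤ q) (z : ℝ) (hz : 0 < z)
    (hz' : z < Real.pi) :
    Filter.Tendsto
      (fun n : ℕ => ∏ k ∈ Finset.range n,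
        (1 / (q : ℝ)) * Real.tan (z * (q : ℝ) ^ (-(k : ℤ)) / 2) *
          Real.cot (z * (q : ℝ) ^ (-(k : ℤ) - 1) / 2))
      Filter.atTop (𝓝 (2 * Real.tan (z / 2) / z)) := by
  have hq1 : (1:ℝ) < (q:ℝ) := by exact_mod_cast lt_of_lt_of_le one_lt_two hq
  have hq0 : (0:ℝ) < (q:ℝ) := by linarith
  set x : ℕ → ℝ := fun k => z * (q:ℝ) ^ (-(k:ℤ)) / 2 with hxdef
  have hxpos : ∀ k, 0 < x k := by
    intro k
    have h : (0:ℝ) < (q:ℝ) ^ (-(k:ℤ)) := zpow_pos hq0 _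
    simp only [hxdef]
    positivity
  have hxlt : ∀ k, x k < Real.pi / 2 := by
    intro k
    have h1 : (q:ℝ) ^ (-(k:ℤ)) ≤ 1 := zpow_le_one_of_nonpos₀ hq1.le (by simp)
    have h2 : z * (q:ℝ) ^ (-(k:ℤ)) ≤ z := mul_le_of_le_one_right hz.le h1
    have : x k ≤ z / 2 := by simp only [hxdef]; linarith
    linarith
  have htanpos : ∀ k, 0 < Real.tan (x k) := fun k =>
    Real.tan_pos_of_pos_of_lt_pi_div_two (hxpos k) (hxlt k)
  have hcot : ∀ k, Real.cot (x k) = 1 / Real.tan (x k) := by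
    intro k
    rw [Real.cot_eq_cos_div_sin, Real.tan_eq_sin_div_cos, one_div_div]
  have key : ∀ n, (∏ k ∈ Finset.range n,
      (1 / (q : ℝ)) * Real.tan (z * (q : ℝ) ^ (-(k : ℤ)) / 2) *
        Real.cot (z * (q : ℝ) ^ (-(k : ℤ) - 1) / 2))
      = Real.tan (x 0) / ((q:ℝ) ^ n * Real.tan (x n)) := by
    intro n
    induction n with
    | zero => simp [div_self (htanpos 0).ne']
    | succ n ih =>
      rw [Finset.prod_range_succ, ih]
      have he : (-(n:ℤ) - 1) = -(((n+1:ℕ)):ℤ) := by push_cast; ring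
      have h2 : z * (q : ℝ) ^ (-(n : ℤ) - 1) / 2 = x (n+1) := by
        rw [he]
      have h1 : z * (q : ℝ) ^ (-(n : ℤ)) / 2 = x n := rfl
      rw [h1, h2, hcot (n+1)]
      have hn0 : Real.tan (x n) ≠ 0 := (htanpos n).ne'
      have hn1 : Real.tan (x (n+1)) ≠ 0 := (htanpos (n+1)).ne'
      have hqn : ((q:ℝ)) ^ n ≠ 0 := by positivity
      field_simp
      ring
  have hfun : ∀ n, Real.tan (x 0) / ((q:ℝ) ^ n * Real.tan (x n))
      = Real.tan (z/2) / ((z/2) * (Real.tan (x n) / x n)) := by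
    intro n
    have hx0 : x 0 = z / 2 := by simp [hxdef]
    have hxn : x n = z * (q:ℝ) ^ (-(n:ℤ)) / 2 := rfl
    have hq' : (q:ℝ) ^ (-(n:ℤ)) = ((q:ℝ) ^ n)⁻¹ := by
      rw [zpow_neg, zpow_natCast]
    have hne : x n ≠ 0 := (hxpos n).ne'
    have hqn : ((q:ℝ)) ^ n ≠ 0 := by positivity
    have hz0 : z ≠ 0 := hz.ne'
    have htn : Real.tan (x n) ≠ 0 := (htanpos n).ne'
    rw [hx0]
    congr 1
    rw [hxn, hq'] at hne ⊢
    field_simp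
  have hx0lim : Filter.Tendsto x Filter.atTop (𝓝 0) := by
    have : x = fun n : ℕ => (z/2) * ((q:ℝ)⁻¹) ^ n := by
      funext n
      simp only [hxdef, zpow_neg, zpow_natCast, inv_pow]
      ring
    rw [this]
    have h := tendsto_pow_atTop_nhds_zero_of_lt_one
      (by positivity : (0:ℝ) ≤ (q:ℝ)⁻¹) (inv_lt_one_of_one_lt₀ hq1)
    simpa using h.const_mul (z/2)
  have hslope : Filter.Tendsto (fun n => Real.tan (x n) / x n) Filter.atTop (𝓝 1) := by
    have hd : HasDerivAt Real.tan 1 0 := by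
      have := Real.hasDerivAt_tan (x := 0) (by simp)
      simpa using this
    have hs := hasDerivAt_iff_tendsto_slope.mp hd
    have hxw : Filter.Tendsto x Filter.atTop (𝓝[≠] 0) := by
      rw [tendsto_nhdsWithin_iff]
      exact ⟨hx0lim, Filter.Eventually.of_forall fun n => (hxpos n).ne'⟩
    have := hs.comp hxw
    have heq : (slope Real.tan 0) ∘ x = fun n => Real.tan (x n) / x n := by
      funext n
      simp [slope, Real.tan_zero, div_eq_inv_mul]
    rwa [heq] at this
  have hmain : Filter.Tendsto
      (fun n => Real.tan (z/2) / ((z/2) * (Real.tan (x n) / x n)))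
      Filter.atTop (𝓝 (Real.tan (z/2) / ((z/2) * 1))) := by
    exact Filter.Tendsto.div tendsto_const_nhds
      ((tendsto_const_nhds).mul hslope) (by positivity)
  have hval : Real.tan (z/2) / ((z/2) * 1) = 2 * Real.tan (z/2) / z := by
    field_simp
  rw [hval] at hmain
  refine hmain.congr fun n => ?_
  rw [key n, hfun n]
end

section
/- Let q be an integer with q ≥ 2 and let z be a real number with 0 < z < π. Then the sequence of partial products n ↦ ∏_{k=0}^{n-1} [ 2^{-(q-1)·q^k} · q^{-q^k·(k·(q-1)+q)} · z^{(q-1)·q^k} · (tan(z·q^{-k-1}/2))^{-q^{k+1}} · (tan(z·q^{-k}/2))^{q^k} ] converges, as n → ∞, to 2·tan(z/2)/z. -/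
open Real Finset Filter Topology

lemma aux_log_tan_div_le {x : ℝ} (hx : 0 < x) (hx1 : x ≤ 1) :
    Real.log (Real.tan x / x) ≤ x ^ 2 := by
  have hpi : (1:ℝ) < π / 2 := by nlinarith [Real.pi_gt_three]
  have hxpi : x < π / 2 := lt_of_le_of_lt hx1 hpi
  have honesub : 1 - x ^ 2 / 2 ≤ Real.cos x := Real.one_sub_sq_div_two_le_cos
  have hcos : (1:ℝ)/2 ≤ Real.cos x := by nlinarith
  have hcos0 : 0 < Real.cos x := by linarith
  have htanpos : 0 < Real.tan x := Real.tan_pos_of_pos_of_lt_pi_div_two hx hxpi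
  have h1 : Real.log (Real.tan x / x) ≤ Real.tan x / x - 1 :=
    Real.log_le_sub_one_of_pos (div_pos htanpos hx)
  have h3 : Real.tan x * Real.cos x ≤ x := by
    have hsc : Real.tan x * Real.cos x = Real.sin x := by
      rw [Real.tan_eq_sin_div_cos]; field_simp
    rw [hsc]; exact Real.sin_le hx.le
  have h2 : Real.tan x / x - 1 ≤ x ^ 2 := by
    rw [div_sub_one hx.ne', div_le_iff₀ hx]
    nlinarith [mul_pos hx hx, mul_le_mul_of_nonneg_left honesub hx.le,
      mul_pos hx (mul_pos hx hx), hcos, hcos0, h3]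
  linarith

theorem tan_zpow_infinite_product (q : ℤ) (hq : 2 ≤ q) (z : ℝ) (hz : 0 < z)
    (hz' : z < Real.pi) :
    Filter.Tendsto
      (fun n : ℕ => ∏ k ∈ Finset.range n,
        (2 : ℝ) ^ (-((q - 1) * q ^ k)) *
          (q : ℝ) ^ (-(q ^ k * ((k : ℤ) * (q - 1) + q))) *
          z ^ ((q - 1) * q ^ k) *
          Real.tan (z * (q : ℝ) ^ (-(k : ℤ) - 1) / 2) ^ (-q ^ (k + 1)) *
          Real.tan (z * (q : ℝ) ^ (-(k : ℤ)) / 2) ^ (q ^ k))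
      Filter.atTop (𝓝 (2 * Real.tan (z / 2) / z)) := by
  have hqR : (2:ℝ) ≤ (q:ℝ) := by exact_mod_cast hq
  have hq0 : (0:ℝ) < (q:ℝ) := by linarith
  have hq0' : (q:ℝ) ≠ 0 := hq0.ne'
  set x : ℕ → ℝ := fun k => z * (q:ℝ) ^ (-(k:ℤ)) / 2 with hxdef
  have hxpos : ∀ k, 0 < x k := fun k => by
    have : (0:ℝ) < (q:ℝ) ^ (-(k:ℤ)) := zpow_pos hq0 _
    simp only [x]; positivity
  have hxle : ∀ k, x k ≤ z / 2 := by
    intro k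
    have h1 : (q:ℝ) ^ (-(k:ℤ)) ≤ 1 := by
      apply zpow_le_one_of_nonpos₀ (by linarith)
      simp
    simp only [x]
    rw [div_le_div_iff₀ (by norm_num) (by norm_num)]
    nlinarith
  have hxlt : ∀ k, x k < π / 2 := fun k =>
    lt_of_le_of_lt (hxle k) (by linarith)
  have htanpos : ∀ k, 0 < Real.tan (x k) := fun k =>
    Real.tan_pos_of_pos_of_lt_pi_div_two (hxpos k) (hxlt k)
  set g : ℕ → ℝ := fun k => ((q ^ k : ℤ) : ℝ) * Real.log (x k / Real.tan (x k)) with hgdef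
  have hlogx : ∀ k : ℕ, Real.log (x k) = Real.log z - (k:ℝ) * Real.log q - Real.log 2 := by
    intro k
    simp only [x]
    rw [Real.log_div (by positivity) (by norm_num),
      Real.log_mul hz.ne' (zpow_pos hq0 _).ne', Real.log_zpow]
    push_cast; ring
  -- each term equals exp (g (k+1) - g k)
  have hterm : ∀ k : ℕ,
      (2 : ℝ) ^ (-((q - 1) * q ^ k)) *
          (q : ℝ) ^ (-(q ^ k * ((k : ℤ) * (q - 1) + q))) *
          z ^ ((q - 1) * q ^ k) *
          Real.tan (z * (q : ℝ) ^ (-(k : ℤ) - 1) / 2) ^ (-q ^ (k + 1)) *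
          Real.tan (z * (q : ℝ) ^ (-(k : ℤ)) / 2) ^ (q ^ k)
        = Real.exp (g (k + 1) - g k) := by
    intro k
    have harg1 : (-(k:ℤ) - 1) = (-(((k+1 : ℕ)) : ℤ)) := by push_cast; ring
    have hx1 : z * (q : ℝ) ^ (-(k : ℤ) - 1) / 2 = x (k+1) := by
      rw [harg1]
    have hx0 : z * (q : ℝ) ^ (-(k : ℤ)) / 2 = x k := rfl
    rw [hx1, hx0]
    have hA : (0:ℝ) < (2 : ℝ) ^ (-((q - 1) * q ^ k)) := zpow_pos (by norm_num) _
    have hB : (0:ℝ) < (q : ℝ) ^ (-(q ^ k * ((k : ℤ) * (q - 1) + q))) := zpow_pos hq0 _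
    have hC : (0:ℝ) < z ^ ((q - 1) * q ^ k) := zpow_pos hz _
    have hD : (0:ℝ) < Real.tan (x (k+1)) ^ (-q ^ (k + 1)) := zpow_pos (htanpos (k+1)) _
    have hE : (0:ℝ) < Real.tan (x k) ^ (q ^ k) := zpow_pos (htanpos k) _
    rw [← Real.exp_log (by positivity :
      (0:ℝ) < (2 : ℝ) ^ (-((q - 1) * q ^ k)) * (q : ℝ) ^ (-(q ^ k * ((k : ℤ) * (q - 1) + q))) *
        z ^ ((q - 1) * q ^ k) * Real.tan (x (k+1)) ^ (-q ^ (k + 1)) *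
        Real.tan (x k) ^ (q ^ k))]
    congr 1
    rw [Real.log_mul (by positivity) hE.ne', Real.log_mul (by positivity) hD.ne',
      Real.log_mul (by positivity) hC.ne', Real.log_mul hA.ne' hB.ne',
      Real.log_zpow, Real.log_zpow, Real.log_zpow, Real.log_zpow, Real.log_zpow]
    simp only [g]
    rw [Real.log_div (hxpos (k+1)).ne' (htanpos (k+1)).ne',
      Real.log_div (hxpos k).ne' (htanpos k).ne', hlogx, hlogx]
    push_cast
    ring
  have hprod : ∀ n : ℕ,
      (∏ k ∈ Finset.range n,
        (2 : ℝ) ^ (-((q - 1) * q ^ k)) *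
          (q : ℝ) ^ (-(q ^ k * ((k : ℤ) * (q - 1) + q))) *
          z ^ ((q - 1) * q ^ k) *
          Real.tan (z * (q : ℝ) ^ (-(k : ℤ) - 1) / 2) ^ (-q ^ (k + 1)) *
          Real.tan (z * (q : ℝ) ^ (-(k : ℤ)) / 2) ^ (q ^ k))
        = Real.exp (g n - g 0) := by
    intro n
    simp only [hterm]
    rw [← Real.exp_sum, Finset.sum_range_sub]
  simp only [hprod]
  -- now show Tendsto g atTop (𝓝 0)
  have hinv : (0:ℝ) < (q:ℝ)⁻¹ := by positivity
  have hinvlt : (q:ℝ)⁻¹ < 1 := by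
    rw [inv_lt_one_iff₀]; right; linarith
  have hpowq : ∀ k : ℕ, (q:ℝ) ^ (-(k:ℤ)) = ((q:ℝ)⁻¹) ^ k := by
    intro k; rw [zpow_neg, zpow_natCast, inv_pow]
  have hxtend : Tendsto x atTop (𝓝 0) := by
    have h := (tendsto_pow_atTop_nhds_zero_of_lt_one hinv.le hinvlt).const_mul (z / 2)
    rw [mul_zero] at h
    refine h.congr fun k => ?_
    simp only [x, hpowq]; ring
  have hgneg : Tendsto (fun n => -g n) atTop (𝓝 0) := by
    apply squeeze_zero' (g := fun n => z^2/4 * ((q:ℝ)⁻¹) ^ n)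
    · filter_upwards with n
      simp only [g, neg_mul, neg_nonneg]
      apply mul_nonpos_of_nonneg_of_nonpos
      · positivity
      · apply Real.log_nonpos
        · exact (div_nonneg (hxpos n).le (htanpos n).le)
        · rw [div_le_one (htanpos n)]
          exact (Real.lt_tan (hxpos n) (hxlt n)).le
    · have hev : ∀ᶠ n in atTop, x n ≤ 1 := by
        have := hxtend.eventually_le_const (by norm_num : (0:ℝ) < 1)
        -- eventually x n < 1
        filter_upwards [hxtend.eventually (gt_mem_nhds (by norm_num : (0:ℝ) < 1))] with n hn
        exact hn.le
      filter_upwards [hev] with n hn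
      have hlog : Real.log (Real.tan (x n) / x n) ≤ (x n) ^ 2 :=
        aux_log_tan_div_le (hxpos n) hn
      have hflip : -g n = ((q ^ n : ℤ) : ℝ) * Real.log (Real.tan (x n) / x n) := by
        simp only [g]
        rw [Real.log_div (hxpos n).ne' (htanpos n).ne',
          Real.log_div (htanpos n).ne' (hxpos n).ne']
        ring
      rw [hflip]
      have hqpow : (0:ℝ) ≤ ((q ^ n : ℤ) : ℝ) := by positivity
      calc ((q ^ n : ℤ) : ℝ) * Real.log (Real.tan (x n) / x n)
          ≤ ((q ^ n : ℤ) : ℝ) * (x n) ^ 2 := by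
            exact mul_le_mul_of_nonneg_left hlog hqpow
        _ = z^2/4 * ((q:ℝ)⁻¹) ^ n := by
            simp only [x, hpowq]
            push_cast
            have hqn : ((q:ℝ)⁻¹) ^ n ≠ 0 := by positivity
            field_simp
            rw [← mul_pow, mul_one_div_cancel hq0', one_pow]; norm_num
    · have h := (tendsto_pow_atTop_nhds_zero_of_lt_one hinv.le hinvlt).const_mul (z^2/4)
      rwa [mul_zero] at h
  have hg : Tendsto g atTop (𝓝 0) := by
    have := hgneg.neg
    simpa using this
  have hfinal : Tendsto (fun n => Real.exp (g n - g 0)) atTop (𝓝 (Real.exp (0 - g 0))) :=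
    (Real.continuous_exp.tendsto _).comp (hg.sub tendsto_const_nhds)
  convert hfinal using 2
  -- 2 * tan (z/2) / z = exp (0 - g 0)
  have hx00 : x 0 = z / 2 := by simp [x]
  have hg0 : g 0 = Real.log ((z/2) / Real.tan (z/2)) := by
    simp [g, hx00]
  have htz : 0 < Real.tan (z/2) := by
    have := htanpos 0; rwa [hx00] at this
  rw [zero_sub, hg0, Real.exp_neg, Real.exp_log (div_pos (by positivity) htz), inv_div]
  field_simp
end

section
/- For every integer n ≥ 2, the sequence of partial products N ↦ ∏_{k=0}^{N-1} (1/2) · tan(π·2^{-k-1}/n) · cot(π·2^{-k-2}/n) converges, as N → ∞, to 2n·tan(π/(2n))/π. -/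
open Real Finset Filter Topology

theorem tan_product_pi_div_n (n : ℕ) (hn : 2 ≤ n) :
    Filter.Tendsto
      (fun N : ℕ => ∏ k ∈ Finset.range N,
        (1 / 2 : ℝ) * Real.tan (Real.pi * (2 : ℝ) ^ (-(k : ℤ) - 1) / n) *
          Real.cot (Real.pi * (2 : ℝ) ^ (-(k : ℤ) - 2) / n))
      Filter.atTop (𝓝 (2 * n * Real.tan (Real.pi / (2 * n)) / Real.pi)) := by
  have hn0 : (0 : ℝ) < n := by positivity
  have hn2 : (2 : ℝ) ≤ n := by exact_mod_cast hn
  set x : ℕ → ℝ := fun k => Real.pi * (2 : ℝ) ^ (-(k : ℤ) - 1) / n with hxdef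
  have hxval : ∀ k : ℕ, x k = Real.pi / (2 * n) * (1 / 2) ^ k := by
    intro k
    have h2 : ((2 : ℝ)) ^ (-(k : ℤ) - 1) = ((2 : ℝ) ^ (k + 1))⁻¹ := by
      rw [show (-(k : ℤ) - 1) = -((k : ℤ) + 1) by ring, zpow_neg]
      norm_cast
    have hp : ((2:ℝ) ^ (k+1)) ≠ 0 := by positivity
    rw [hxdef]
    simp only [h2]
    rw [pow_succ, one_div, inv_pow]
    field_simp
  have hx_pos : ∀ k, 0 < x k := by
    intro k
    rw [hxval]
    positivity
  have hx_lt : ∀ k, x k < Real.pi / 2 := by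
    intro k
    rw [hxval]
    have h1 : (1 / 2 : ℝ) ^ k ≤ 1 := pow_le_one₀ (by norm_num) (by norm_num)
    have : Real.pi / (2 * n) * (1 / 2) ^ k ≤ Real.pi / (2 * n) := by
      have hpos : 0 ≤ Real.pi / (2 * n) := by positivity
      exact mul_le_of_le_one_right hpos h1
    have h2 : Real.pi / (2 * n) < Real.pi / 2 := by
      apply div_lt_div_of_pos_left Real.pi_pos (by norm_num)
      nlinarith
    linarith
  have htan_pos : ∀ k, 0 < Real.tan (x k) :=
    fun k => Real.tan_pos_of_pos_of_lt_pi_div_two (hx_pos k) (hx_lt k)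
  have key : ∀ N : ℕ, (∏ k ∈ Finset.range N,
        (1 / 2 : ℝ) * Real.tan (Real.pi * (2 : ℝ) ^ (-(k : ℤ) - 1) / n) *
          Real.cot (Real.pi * (2 : ℝ) ^ (-(k : ℤ) - 2) / n))
      = Real.tan (x 0) / (2 ^ N * Real.tan (x N)) := by
    intro N
    induction N with
    | zero => simp [div_self (ne_of_gt (htan_pos 0))]
    | succ N ih =>
      rw [Finset.prod_range_succ, ih]
      have harg : Real.pi * (2 : ℝ) ^ (-(N : ℤ) - 2) / n = x (N + 1) := by
        rw [hxdef]
        norm_num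
        ring_nf
      have hcot : Real.cot (Real.pi * (2 : ℝ) ^ (-(N : ℤ) - 2) / n)
          = 1 / Real.tan (x (N + 1)) := by
        rw [harg, Real.cot_eq_cos_div_sin, Real.tan_eq_sin_div_cos]
        rw [one_div, inv_div]
      have hxN := x N
      rw [hcot]
      have hN := ne_of_gt (htan_pos N)
      have hN1 := ne_of_gt (htan_pos (N + 1))
      field_simp
      ring
  have hx0 : x 0 = Real.pi / (2 * n) := by rw [hxval]; norm_num
  -- limit of 2^N * tan (x N)
  have hxt0 : Tendsto x atTop (𝓝 0) := by
    have hfe : x = fun k => Real.pi / (2 * n) * (1 / 2) ^ k := funext hxval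
    rw [hfe]
    have := tendsto_pow_atTop_nhds_zero_of_lt_one (by norm_num : (0:ℝ) ≤ 1/2)
      (by norm_num : (1/2 : ℝ) < 1)
    simpa using this.const_mul (Real.pi / (2 * n))
  have hxt0' : Tendsto x atTop (𝓝[≠] 0) := by
    rw [tendsto_nhdsWithin_iff]
    exact ⟨hxt0, Eventually.of_forall fun k => ne_of_gt (hx_pos k)⟩
  have hslope : Tendsto (fun y : ℝ => Real.tan y / y) (𝓝[≠] 0) (𝓝 1) := by
    have hder : HasDerivAt Real.tan 1 0 := by
      have := Real.hasDerivAt_tan (by norm_num : Real.cos 0 ≠ 0)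
      simpa using this
    have := hasDerivAt_iff_tendsto_slope.mp hder
    refine this.congr' ?_
    filter_upwards with y
    simp [slope_def_field, Real.tan_zero]
  have hratio : Tendsto (fun N => Real.tan (x N) / x N) atTop (𝓝 1) :=
    hslope.comp hxt0'
  have hdenom : Tendsto (fun N : ℕ => 2 ^ N * Real.tan (x N)) atTop
      (𝓝 (Real.pi / (2 * n))) := by
    have heq : ∀ N : ℕ, (2 : ℝ) ^ N * Real.tan (x N)
        = Real.pi / (2 * n) * (Real.tan (x N) / x N) := by
      intro N
      have hxne := ne_of_gt (hx_pos N)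
      rw [hxval N] at hxne ⊢
      have h2 : (2 : ℝ) ^ N ≠ 0 := by positivity
      field_simp
      rw [← mul_pow]; norm_num
    simp only [heq]
    have := hratio.const_mul (Real.pi / (2 * n))
    simpa using this
  have hlim : Tendsto (fun N : ℕ => Real.tan (x 0) / (2 ^ N * Real.tan (x N)))
      atTop (𝓝 (Real.tan (x 0) / (Real.pi / (2 * n)))) := by
    exact tendsto_const_nhds.div hdenom (by positivity)
  have hconst : Real.tan (x 0) / (Real.pi / (2 * n))
      = 2 * n * Real.tan (Real.pi / (2 * n)) / Real.pi := by
    rw [hx0]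
    field_simp
  rw [← hconst]
  exact hlim.congr fun N => (key N).symm
end

section
/- The sequence of partial products N ↦ ∏_{k=0}^{N-1} (1/2) · tan(π·2^{-k-2}) · cot(π·2^{-k-3}) converges, as N → ∞, to 4/π. -/
open Real Finset Filter Topology

lemma hexp (N : ℕ) : (2:ℝ) ^ (-(N:ℤ)-2) = ((2:ℝ)^N)⁻¹ * (4:ℝ)⁻¹ := by
  rw [show (-(N:ℤ)-2) = -((N:ℤ)+2) by ring, zpow_neg, zpow_add₀ (two_ne_zero), zpow_natCast]
  norm_num [mul_inv]; ring

lemma theta_pos (N : ℕ) : 0 < Real.pi * (2:ℝ)^(-(N:ℤ)-2) := by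
  have := Real.pi_pos
  positivity

lemma theta_lt (N : ℕ) : Real.pi * (2:ℝ)^(-(N:ℤ)-2) < Real.pi/2 := by
  rw [hexp]
  have h1 : ((2:ℝ)^N)⁻¹ ≤ 1 := by
    rw [inv_le_one_iff₀]; right; exact one_le_pow₀ (by norm_num)
  nlinarith [Real.pi_pos]

lemma sin_theta_ne (N : ℕ) : Real.sin (Real.pi * (2:ℝ)^(-(N:ℤ)-2)) ≠ 0 :=
  (Real.sin_pos_of_pos_of_lt_pi (theta_pos N)
    (lt_trans (theta_lt N) (by linarith [Real.pi_pos]))).ne'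

lemma cos_theta_ne (N : ℕ) : Real.cos (Real.pi * (2:ℝ)^(-(N:ℤ)-2)) ≠ 0 :=
  (Real.cos_pos_of_mem_Ioo ⟨by linarith [theta_pos N, Real.pi_pos], theta_lt N⟩).ne'

lemma tan_cot (N : ℕ) : Real.tan (Real.pi * (2:ℝ)^(-(N:ℤ)-2)) *
    Real.cot (Real.pi * (2:ℝ)^(-(N:ℤ)-2)) = 1 := by
  rw [Real.tan_eq_sin_div_cos, Real.cot_eq_cos_div_sin]
  field_simp [sin_theta_ne N, cos_theta_ne N]

lemma prod_eq (N : ℕ) : (∏ k ∈ Finset.range N,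
    (1 / 2 : ℝ) * Real.tan (Real.pi * (2 : ℝ) ^ (-(k : ℤ) - 2)) *
      Real.cot (Real.pi * (2 : ℝ) ^ (-(k : ℤ) - 3)))
    = ((2:ℝ)^N)⁻¹ * Real.cot (Real.pi * (2:ℝ)^(-(N:ℤ)-2)) := by
  induction N with
  | zero =>
    have h : Real.pi * (2:ℝ)^(-(0:ℤ)-2) = Real.pi/4 := by norm_num; ring
    rw [Finset.prod_range_zero, Nat.cast_zero, h, Real.cot_eq_cos_div_sin, Real.cos_pi_div_four,
      Real.sin_pi_div_four]
    norm_num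
  | succ n ih =>
    rw [Finset.prod_range_succ, ih]
    have h1 : Real.pi * (2:ℝ)^(-((n+1:ℕ):ℤ)-2) = Real.pi * (2:ℝ)^(-(n:ℤ)-3) := by
      push_cast; ring_nf
    rw [h1]
    have h2 := tan_cot n
    have : ((2:ℝ)^(n+1))⁻¹ = ((2:ℝ)^n)⁻¹ * (1/2) := by
      rw [pow_succ]; field_simp
    rw [this]
    linear_combination ((2:ℝ)^n)⁻¹ * (1/2) * Real.cot (Real.pi * (2:ℝ)^(-(n:ℤ)-3)) * h2

theorem tan_product_four_div_pi :
    Filter.Tendsto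
      (fun N : ℕ => ∏ k ∈ Finset.range N,
        (1 / 2 : ℝ) * Real.tan (Real.pi * (2 : ℝ) ^ (-(k : ℤ) - 2)) *
          Real.cot (Real.pi * (2 : ℝ) ^ (-(k : ℤ) - 3)))
      Filter.atTop (𝓝 (4 / Real.pi)) := by
  have pi_pos := Real.pi_pos
  -- x * cot x → 1 as x → 0 (x ≠ 0)
  have h1 : Tendsto (fun x : ℝ => Real.sin x / x) (𝓝[≠] 0) (𝓝 1) := by
    have := (Real.hasDerivAt_sin 0)
    rw [hasDerivAt_iff_tendsto_slope] at this
    simp only [slope_fun_def, Real.sin_zero, Real.cos_zero, sub_zero, vsub_eq_sub, smul_eq_mul] at this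
    exact this.congr (fun x => by rw [div_eq_inv_mul])
  have h2 : Tendsto (fun x : ℝ => x / Real.sin x) (𝓝[≠] 0) (𝓝 1) := by
    have := h1.inv₀ one_ne_zero
    simpa [inv_div] using this
  have h3 : Tendsto Real.cos (𝓝[≠] (0:ℝ)) (𝓝 1) := by
    have h := (Real.continuous_cos.tendsto 0).mono_left
      (nhdsWithin_le_nhds (s := {(0:ℝ)}ᶜ))
    simpa using h
  have hg : Tendsto (fun x : ℝ => x * Real.cot x) (𝓝[≠] 0) (𝓝 1) := by
    have := h3.mul h2
    rw [mul_one] at this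
    refine this.congr (fun x => ?_)
    rw [Real.cot_eq_cos_div_sin]; ring
  -- θ N → 0 within ≠ 0
  have hθ0 : Tendsto (fun N : ℕ => Real.pi * (2:ℝ)^(-(N:ℤ)-2)) atTop (𝓝 0) := by
    have : Tendsto (fun N : ℕ => ((2:ℝ)⁻¹)^N) atTop (𝓝 0) :=
      tendsto_pow_atTop_nhds_zero_of_lt_one (by norm_num) (by norm_num)
    have h := (this.const_mul (Real.pi * (4:ℝ)⁻¹))
    rw [mul_zero] at h
    refine h.congr (fun N => ?_)
    rw [hexp, inv_pow]; ring
  have hθ : Tendsto (fun N : ℕ => Real.pi * (2:ℝ)^(-(N:ℤ)-2)) atTop (𝓝[≠] 0) :=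
    tendsto_nhdsWithin_of_tendsto_nhds_of_eventually_within _ hθ0
      (Filter.Eventually.of_forall fun N => (theta_pos N).ne')
  have hmain := ((hg.comp hθ).const_mul (4 / Real.pi))
  rw [mul_one] at hmain
  refine hmain.congr (fun N => ?_)
  rw [prod_eq N]
  simp only [Function.comp]
  rw [hexp]
  field_simp
end

section
/- The sequence of partial products N ↦ ∏_{k=0}^{N-1} (1/2) · tan(π·2^{-k-1}/3) · cot(π·2^{-k-2}/3) converges, as N → ∞, to 2·√3/π. -/
open Real Finset Filter Topology

noncomputable def tptθ (k : ℕ) : ℝ := Real.pi * (2 : ℝ) ^ (-(k : ℤ) - 1) / 3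

lemma tptθ_pos (k : ℕ) : 0 < tptθ k := by
  have := Real.pi_pos
  have h2 : (0:ℝ) < (2 : ℝ) ^ (-(k : ℤ) - 1) := zpow_pos (by norm_num) _
  unfold tptθ; positivity

lemma tptθ_lt (k : ℕ) : tptθ k < Real.pi / 2 := by
  have hπ := Real.pi_pos
  have h2 : (2 : ℝ) ^ (-(k : ℤ) - 1) ≤ 1/2 := by
    have h := zpow_le_zpow_right₀ (show (1:ℝ) ≤ 2 by norm_num)
      (show -(k:ℤ) - 1 ≤ -1 by omega)
    norm_num at h
    linarith
  unfold tptθ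
  nlinarith [mul_le_mul_of_nonneg_left h2 hπ.le]

lemma tptθ_tan_pos (k : ℕ) : 0 < Real.tan (tptθ k) :=
  Real.tan_pos_of_pos_of_lt_pi_div_two (tptθ_pos k) (tptθ_lt k)

lemma tpt_prod (N : ℕ) :
    ∏ k ∈ Finset.range N,
        (1 / 2 : ℝ) * Real.tan (Real.pi * (2 : ℝ) ^ (-(k : ℤ) - 1) / 3) *
          Real.cot (Real.pi * (2 : ℝ) ^ (-(k : ℤ) - 2) / 3)
      = (2 : ℝ) ^ (-(N : ℤ)) * Real.tan (tptθ 0) / Real.tan (tptθ N) := by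
  induction N with
  | zero =>
      simp [div_self (ne_of_gt (tptθ_tan_pos 0))]
  | succ n ih =>
      rw [Finset.prod_range_succ, ih]
      have harg : Real.pi * (2 : ℝ) ^ (-(n : ℤ) - 2) / 3 = tptθ (n + 1) := by
        unfold tptθ; push_cast; ring_nf
      rw [harg, Real.cot_eq_cos_div_sin]
      have hθn : Real.pi * (2 : ℝ) ^ (-(n : ℤ) - 1) / 3 = tptθ n := rfl
      rw [hθn]
      have hsin : Real.sin (tptθ (n+1)) ≠ 0 :=
        ne_of_gt (Real.sin_pos_of_pos_of_lt_pi (tptθ_pos _)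
          (lt_trans (tptθ_lt _) (by linarith [Real.pi_pos])))
      have hcos : Real.cos (tptθ (n+1)) ≠ 0 :=
        ne_of_gt (Real.cos_pos_of_mem_Ioo ⟨by linarith [tptθ_pos (n+1), Real.pi_pos], tptθ_lt _⟩)
      have htan1 : Real.tan (tptθ (n+1)) ≠ 0 := ne_of_gt (tptθ_tan_pos _)
      have htann : Real.tan (tptθ n) ≠ 0 := ne_of_gt (tptθ_tan_pos _)
      rw [Real.tan_eq_sin_div_cos (tptθ (n+1))] at htan1 ⊢
      have hpow : (2:ℝ) ^ (-((n:ℤ)+1)) = (2:ℝ) ^ (-(n:ℤ)) / 2 := by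
        rw [show -((n:ℤ)+1) = -(n:ℤ) - 1 by ring, zpow_sub₀ (by norm_num)]
        norm_num
      push_cast
      rw [hpow]
      field_simp

theorem tan_product_two_sqrt_three_div_pi :
    Filter.Tendsto
      (fun N : ℕ => ∏ k ∈ Finset.range N,
        (1 / 2 : ℝ) * Real.tan (Real.pi * (2 : ℝ) ^ (-(k : ℤ) - 1) / 3) *
          Real.cot (Real.pi * (2 : ℝ) ^ (-(k : ℤ) - 2) / 3))
      Filter.atTop (𝓝 (2 * Real.sqrt 3 / Real.pi)) := by
  have hπ := Real.pi_pos
  -- rewrite the partial products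
  have hfun : ∀ N : ℕ,
      (∏ k ∈ Finset.range N,
        (1 / 2 : ℝ) * Real.tan (Real.pi * (2 : ℝ) ^ (-(k : ℤ) - 1) / 3) *
          Real.cot (Real.pi * (2 : ℝ) ^ (-(k : ℤ) - 2) / 3))
      = 2 * Real.sqrt 3 / Real.pi * (tptθ N / Real.tan (tptθ N)) := by
    intro N
    rw [tpt_prod N]
    have h0 : tptθ 0 = Real.pi / 6 := by unfold tptθ; norm_num; ring
    have htann : Real.tan (tptθ N) ≠ 0 := ne_of_gt (tptθ_tan_pos _)
    rw [h0, Real.tan_pi_div_six, div_eq_iff htann, mul_assoc,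
      div_mul_cancel₀ _ htann]
    have hpow : (2:ℝ) ^ (-(N:ℤ) - 1) = (2:ℝ) ^ (-(N:ℤ)) / 2 := by
      rw [zpow_sub₀ (by norm_num : (2:ℝ) ≠ 0)]; norm_num
    unfold tptθ
    rw [hpow]
    have h3 : Real.sqrt 3 * Real.sqrt 3 = 3 := Real.mul_self_sqrt (by norm_num)
    have hs : Real.sqrt 3 ≠ 0 := by positivity
    have hπ' : Real.pi ≠ 0 := Real.pi_ne_zero
    field_simp
    linear_combination (-1) * h3
  simp only [hfun]
  -- θ N → 0 within ≠ 0
  have hθ0 : Filter.Tendsto tptθ Filter.atTop (𝓝[≠] 0) := by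
    apply tendsto_nhdsWithin_of_tendsto_nhds_of_eventually_within
    · have : Filter.Tendsto (fun N : ℕ => (2:ℝ) ^ (-(N:ℤ) - 1)) Filter.atTop (𝓝 0) := by
        have h := tendsto_pow_atTop_nhds_zero_of_lt_one
          (show (0:ℝ) ≤ 1/2 by norm_num) (show (1/2:ℝ) < 1 by norm_num)
        have heq : ∀ N : ℕ, (2:ℝ) ^ (-(N:ℤ) - 1) = (1/2:ℝ) ^ N * (1/2) := by
          intro N
          rw [zpow_sub₀ (by norm_num : (2:ℝ) ≠ 0), zpow_neg, ← zpow_natCast]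
          norm_num [inv_pow]
          simp [div_eq_mul_inv]
        simp only [heq]
        simpa using h.mul_const (1/2:ℝ)
      have := (this.const_mul Real.pi).div_const 3
      simp only [mul_zero, zero_div] at this; exact this
    · exact Filter.Eventually.of_forall fun N => ne_of_gt (tptθ_pos N)
  -- tan x / x → 1
  have hderiv : HasDerivAt Real.tan 1 0 := by
    have := Real.hasDerivAt_tan (x := 0) (by simp)
    simpa using this
  have hslope : Filter.Tendsto (fun x : ℝ => Real.tan x / x) (𝓝[≠] 0) (𝓝 1) := by
    have h := (hasDerivAt_iff_tendsto_slope.mp hderiv)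
    have heq : ∀ x : ℝ, slope Real.tan 0 x = Real.tan x / x := fun x => by
      simp [slope_def_field]
    exact Filter.Tendsto.congr heq h
  have hcomp : Filter.Tendsto (fun N => Real.tan (tptθ N) / tptθ N)
      Filter.atTop (𝓝 1) := hslope.comp hθ0
  have hinv : Filter.Tendsto (fun N => tptθ N / Real.tan (tptθ N))
      Filter.atTop (𝓝 1) := by
    have := hcomp.inv₀ (by norm_num)
    simpa [inv_div] using this
  have := hinv.const_mul (2 * Real.sqrt 3 / Real.pi)
  simpa using this
end

section
/- The sequence of partial products N ↦ ∏_{k=0}^{N-1} (1/2) · tan(π·2^{-k-3}) · cot(π·2^{-k-4}) converges, as N → ∞, to (8/π)·√((2-√2)/(2+√2)). -/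
open Real Finset Filter Topology

lemma arg_mem (m : ℤ) (hm : m ≤ -3) :
    0 < Real.pi * (2 : ℝ) ^ m ∧ Real.pi * (2 : ℝ) ^ m < Real.pi / 2 := by
  constructor
  · positivity
  · have h2 : (2 : ℝ) ^ m ≤ (2 : ℝ) ^ (-3 : ℤ) := zpow_le_zpow_right₀ one_le_two hm
    have h8 : (2 : ℝ) ^ (-3 : ℤ) = 1 / 8 := by norm_num
    rw [h8] at h2
    nlinarith [Real.pi_pos, mul_le_mul_of_nonneg_left h2 Real.pi_pos.le]

lemma tan_pos_aux (m : ℤ) (hm : m ≤ -3) : 0 < Real.tan (Real.pi * (2 : ℝ) ^ m) := by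
  obtain ⟨h1, h2⟩ := arg_mem m hm
  exact Real.tan_pos_of_pos_of_lt_pi_div_two h1 h2

lemma sin_pos_aux (m : ℤ) (hm : m ≤ -3) : 0 < Real.sin (Real.pi * (2 : ℝ) ^ m) := by
  obtain ⟨h1, h2⟩ := arg_mem m hm
  exact Real.sin_pos_of_pos_of_lt_pi h1 (by linarith [Real.pi_pos])

lemma cos_pos_aux (m : ℤ) (hm : m ≤ -3) : 0 < Real.cos (Real.pi * (2 : ℝ) ^ m) := by
  obtain ⟨h1, h2⟩ := arg_mem m hm
  exact Real.cos_pos_of_mem_Ioo ⟨by linarith [Real.pi_pos], h2⟩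

lemma partial_prod (N : ℕ) :
    (∏ k ∈ Finset.range N,
        (1 / 2 : ℝ) * Real.tan (Real.pi * (2 : ℝ) ^ (-(k : ℤ) - 3)) *
          Real.cot (Real.pi * (2 : ℝ) ^ (-(k : ℤ) - 4)))
      = Real.tan (Real.pi / 8) * (2 : ℝ) ^ (-(N : ℤ)) /
          Real.tan (Real.pi * (2 : ℝ) ^ (-(N : ℤ) - 3)) := by
  induction N with
  | zero =>
      have h8 : Real.pi * (2 : ℝ) ^ (-((0 : ℕ) : ℤ) - 3) = Real.pi / 8 := by
        norm_num; ring
      rw [h8]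
      have ht : Real.tan (Real.pi / 8) ≠ 0 := by
        have h := tan_pos_aux (-3) le_rfl
        rw [show Real.pi * (2 : ℝ) ^ (-3 : ℤ) = Real.pi / 8 by norm_num; ring] at h
        linarith
      simp [ht]
  | succ n ih =>
      rw [Finset.prod_range_succ, ih]
      have hcast : (-(↑(n + 1) : ℤ) - 3) = -(n : ℤ) - 4 := by push_cast; ring
      rw [hcast]
      have h3 : (-(n : ℤ) - 3) ≤ -3 := by omega
      have h4 : (-(n : ℤ) - 4) ≤ -3 := by omega
      have htan3 := tan_pos_aux _ h3
      have htan4 := tan_pos_aux _ h4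
      have hsin4 := sin_pos_aux _ h4
      have hcos4 := cos_pos_aux _ h4
      rw [Real.cot_eq_cos_div_sin, Real.tan_eq_sin_div_cos (Real.pi * 2 ^ (-(n:ℤ) - 4))]
      have hpow : (2 : ℝ) ^ (-(↑(n + 1) : ℤ)) = (2 : ℝ) ^ (-(n : ℤ)) / 2 := by
        rw [show (-(↑(n + 1) : ℤ)) = -(n : ℤ) - 1 by push_cast; ring,
          zpow_sub₀ (by norm_num : (2:ℝ) ≠ 0)]
        norm_num
      rw [hpow]
      field_simp

lemma tendsto_div_tan : Filter.Tendsto (fun x : ℝ => x / Real.tan x) (𝓝[≠] 0) (𝓝 1) := by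
  have hd : HasDerivAt Real.tan 1 0 := by
    simpa using Real.hasDerivAt_tan (by simp : Real.cos 0 ≠ 0)
  have h1 : Filter.Tendsto (fun b : ℝ => b⁻¹ * Real.tan b) (𝓝[≠] 0) (𝓝 1) := by
    simpa [slope_fun_def, Real.tan_zero] using hasDerivAt_iff_tendsto_slope.mp hd
  have h2 := h1.inv₀ one_ne_zero
  simp only [mul_inv, inv_inv, inv_one] at h2
  simpa [div_eq_mul_inv, mul_comm] using h2

theorem tan_product_pi_div_four :
    Filter.Tendsto
      (fun N : ℕ => ∏ k ∈ Finset.range N,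
        (1 / 2 : ℝ) * Real.tan (Real.pi * (2 : ℝ) ^ (-(k : ℤ) - 3)) *
          Real.cot (Real.pi * (2 : ℝ) ^ (-(k : ℤ) - 4)))
      Filter.atTop
      (𝓝 (8 / Real.pi * Real.sqrt ((2 - Real.sqrt 2) / (2 + Real.sqrt 2)))) := by
  have hpi := Real.pi_pos
  have htan8 : Real.tan (Real.pi / 8) = Real.sqrt ((2 - Real.sqrt 2) / (2 + Real.sqrt 2)) := by
    rw [Real.tan_eq_sin_div_cos, Real.sin_pi_div_eight, Real.cos_pi_div_eight,
      Real.sqrt_div' _ (by positivity : (0:ℝ) ≤ 2 + Real.sqrt 2)]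
    have h0 : Real.sqrt (2 + Real.sqrt 2) ≠ 0 := by positivity
    field_simp
  -- the argument sequence
  set x : ℕ → ℝ := fun N => Real.pi * (2 : ℝ) ^ (-(N : ℤ) - 3) with hx
  have hxpos : ∀ N, 0 < x N := fun N => (arg_mem _ (by omega)).1
  have hx0 : Filter.Tendsto x Filter.atTop (𝓝 0) := by
    have hfun : x = fun N : ℕ => Real.pi / 8 * (1 / 2 : ℝ) ^ N := by
      funext N
      show Real.pi * (2 : ℝ) ^ (-(N : ℤ) - 3) = Real.pi / 8 * (1 / 2 : ℝ) ^ N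
      rw [show (-(N : ℤ) - 3) = (-3 : ℤ) + (-(N:ℤ)) by ring,
        zpow_add₀ (by norm_num : (2:ℝ) ≠ 0),
        show (2:ℝ) ^ (-(N:ℤ)) = ((1:ℝ)/2) ^ N by
          rw [zpow_neg, zpow_natCast, ← inv_pow, one_div],
        show (2:ℝ) ^ (-3 : ℤ) = 1/8 by norm_num]
      ring
    rw [hfun]
    simpa using (tendsto_pow_atTop_nhds_zero_of_lt_one (by norm_num) (by norm_num :
      (1/2 : ℝ) < 1)).const_mul (Real.pi / 8)
  have hxne : Filter.Tendsto x Filter.atTop (𝓝[≠] 0) := by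
    rw [tendsto_nhdsWithin_iff]
    exact ⟨hx0, Filter.Eventually.of_forall fun N => (hxpos N).ne'⟩
  have hlim : Filter.Tendsto (fun N => x N / Real.tan (x N)) Filter.atTop (𝓝 1) :=
    tendsto_div_tan.comp hxne
  have heq : ∀ N : ℕ,
      (∏ k ∈ Finset.range N,
        (1 / 2 : ℝ) * Real.tan (Real.pi * (2 : ℝ) ^ (-(k : ℤ) - 3)) *
          Real.cot (Real.pi * (2 : ℝ) ^ (-(k : ℤ) - 4)))
        = 8 / Real.pi * Real.tan (Real.pi / 8) * (x N / Real.tan (x N)) := by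
    intro N
    have h8 : (2:ℝ) ^ (-(N:ℤ)) = 8 / Real.pi * x N := by
      simp only [hx]
      rw [show (-(N : ℤ) - 3) = -(N:ℤ) + (-3 : ℤ) by ring,
        zpow_add₀ (by norm_num : (2:ℝ) ≠ 0),
        show (2:ℝ) ^ (-3 : ℤ) = 1/8 by norm_num]
      field_simp
    rw [partial_prod N, h8]
    simp only [hx]
    ring
  have hfin : Filter.Tendsto
      (fun N => 8 / Real.pi * Real.tan (Real.pi / 8) * (x N / Real.tan (x N)))
      Filter.atTop (𝓝 (8 / Real.pi * Real.tan (Real.pi / 8) * 1)) :=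
    hlim.const_mul _
  rw [mul_one] at hfin
  rw [← htan8]
  exact hfin.congr fun N => (heq N).symm
end

section
/- The sequence of partial products N ↦ ∏_{k=0}^{N-1} (1/2) · tan(π·2^{-k-1}/6) · cot(π·2^{-k-2}/6) converges, as N → ∞, to 12·(2-√3)/π. -/
open Real Finset Filter Topology

noncomputable def xx (k : ℕ) : ℝ := Real.pi * (2 : ℝ) ^ (-(k : ℤ) - 1) / 6

lemma xx_pos (k : ℕ) : 0 < xx k := by unfold xx; positivity

lemma xx_lt (k : ℕ) : xx k < Real.pi / 2 := by
  unfold xx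
  rw [div_lt_iff₀ (by norm_num : (0:ℝ) < 6)] at *
  have h : (2:ℝ) ^ (-(k : ℤ) - 1) ≤ 2 ^ (-1 : ℤ) := by
    apply zpow_le_zpow_right₀ (by norm_num) (by omega)
  have := Real.pi_pos
  calc Real.pi * (2:ℝ) ^ (-(k : ℤ) - 1) ≤ Real.pi * 2 ^ (-1:ℤ) :=
        mul_le_mul_of_nonneg_left h (le_of_lt this)
    _ < Real.pi / 2 * 6 := by rw [zpow_neg_one]; nlinarith

lemma tan_xx_pos (k : ℕ) : 0 < Real.tan (xx k) :=
  Real.tan_pos_of_pos_of_lt_pi_div_two (xx_pos k) (xx_lt k)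

lemma tan_pi_div_twelve' : Real.tan (Real.pi / 12) = 2 - Real.sqrt 3 := by
  have h12 : Real.pi / 12 = Real.pi / 3 - Real.pi / 4 := by ring
  have s2 : Real.sqrt 2 ^ 2 = 2 := Real.sq_sqrt (by norm_num)
  have s3 : Real.sqrt 3 ^ 2 = 3 := Real.sq_sqrt (by norm_num)
  have s2p : (0:ℝ) < Real.sqrt 2 := Real.sqrt_pos.2 (by norm_num)
  have s3p : (0:ℝ) < Real.sqrt 3 := Real.sqrt_pos.2 (by norm_num)
  rw [Real.tan_eq_sin_div_cos, h12, Real.sin_sub, Real.cos_sub,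
    Real.sin_pi_div_three, Real.cos_pi_div_three, Real.sin_pi_div_four, Real.cos_pi_div_four]
  rw [div_eq_iff]
  · ring_nf
    nlinarith [sq_nonneg (Real.sqrt 2 * Real.sqrt 3), sq_nonneg (Real.sqrt 2 - Real.sqrt 3)]
  · nlinarith

lemma closed_form (N : ℕ) :
    ∏ k ∈ Finset.range N,
      (1 / 2 : ℝ) * Real.tan (Real.pi * (2 : ℝ) ^ (-(k : ℤ) - 1) / 6) *
        Real.cot (Real.pi * (2 : ℝ) ^ (-(k : ℤ) - 2) / 6)
    = (2 - Real.sqrt 3) * (1 / 2 : ℝ) ^ N / Real.tan (xx N) := by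
  induction N with
  | zero =>
      simp only [Finset.range_zero, Finset.prod_empty, pow_zero]
      have : xx 0 = Real.pi / 12 := by unfold xx; norm_num; ring
      rw [this, tan_pi_div_twelve']
      have h3 : Real.sqrt 3 < 2 := by
        nlinarith [Real.sq_sqrt (by norm_num : (3:ℝ) ≥ 0), Real.sqrt_nonneg 3]
      rw [mul_one, div_self (by nlinarith : (2:ℝ) - Real.sqrt 3 ≠ 0)]
  | succ n ih =>
      rw [Finset.prod_range_succ, ih]
      have hx : Real.pi * (2 : ℝ) ^ (-(n : ℤ) - 1) / 6 = xx n := rfl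
      have hx2 : Real.pi * (2 : ℝ) ^ (-(n : ℤ) - 2) / 6 = xx (n + 1) := by
        unfold xx; push_cast; ring_nf
      rw [hx, hx2, Real.cot_eq_cos_div_sin]
      have h1 : Real.tan (xx n) ≠ 0 := ne_of_gt (tan_xx_pos n)
      have h2 : Real.tan (xx (n+1)) ≠ 0 := ne_of_gt (tan_xx_pos (n+1))
      have hs : Real.sin (xx (n+1)) ≠ 0 := by
        intro h; rw [Real.tan_eq_sin_div_cos, h] at h2; simp at h2
      have hc : Real.cos (xx (n+1)) ≠ 0 := by
        intro h; rw [Real.tan_eq_sin_div_cos, h] at h2; simp at h2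
      rw [Real.tan_eq_sin_div_cos (xx (n+1))]
      field_simp
      ring

theorem tan_product_pi_div_six :
    Filter.Tendsto
      (fun N : ℕ => ∏ k ∈ Finset.range N,
        (1 / 2 : ℝ) * Real.tan (Real.pi * (2 : ℝ) ^ (-(k : ℤ) - 1) / 6) *
          Real.cot (Real.pi * (2 : ℝ) ^ (-(k : ℤ) - 2) / 6))
      Filter.atTop (𝓝 (12 * (2 - Real.sqrt 3) / Real.pi)) := by
  have hpi := Real.pi_pos
  -- rewrite using closed form
  have heq : ∀ N : ℕ, (∏ k ∈ Finset.range N,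
        (1 / 2 : ℝ) * Real.tan (Real.pi * (2 : ℝ) ^ (-(k : ℤ) - 1) / 6) *
          Real.cot (Real.pi * (2 : ℝ) ^ (-(k : ℤ) - 2) / 6))
      = (12 * (2 - Real.sqrt 3) / Real.pi) * (xx N / Real.tan (xx N)) := by
    intro N
    rw [closed_form]
    have hxN : xx N = Real.pi * (1/2 : ℝ) ^ N / 12 := by
      unfold xx
      rw [zpow_sub₀ (by norm_num : (2:ℝ) ≠ 0), zpow_neg, zpow_natCast, ← inv_pow]
      norm_num
      ring
    rw [hxN]
    have h2N : ((1:ℝ)/2) ^ N ≠ 0 := by positivity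
    field_simp
  simp only [heq]
  -- limit of xx N / tan (xx N) is 1
  have hx0 : Filter.Tendsto xx Filter.atTop (𝓝 0) := by
    have : Filter.Tendsto (fun N : ℕ => Real.pi / 12 * (1/2 : ℝ) ^ N) Filter.atTop (𝓝 (Real.pi / 12 * 0)) :=
      (tendsto_pow_atTop_nhds_zero_of_lt_one (by norm_num) (by norm_num)).const_mul _
    rw [mul_zero] at this
    refine this.congr (fun N => ?_)
    unfold xx
    rw [zpow_sub₀ (by norm_num : (2:ℝ) ≠ 0), zpow_neg, zpow_natCast, ← inv_pow]
    norm_num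
    ring
  have hderiv : HasDerivAt Real.tan 1 0 := by
    have := Real.hasDerivAt_tan (x := 0) (by simp)
    simpa using this
  have hslope : Filter.Tendsto (fun y : ℝ => Real.tan y / y) (𝓝[≠] (0:ℝ)) (𝓝 1) := by
    have := hasDerivAt_iff_tendsto_slope.mp hderiv
    refine this.congr' ?_
    filter_upwards [self_mem_nhdsWithin] with y hy
    simp [slope_def_field, Real.tan_zero, div_eq_div_iff]
  have hxne : Filter.Tendsto xx Filter.atTop (𝓝[≠] (0:ℝ)) := by
    apply tendsto_nhdsWithin_of_tendsto_nhds_of_eventually_within _ hx0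
    filter_upwards with N using ne_of_gt (xx_pos N)
  have htan : Filter.Tendsto (fun N => Real.tan (xx N) / xx N) Filter.atTop (𝓝 1) :=
    hslope.comp hxne
  have hinv : Filter.Tendsto (fun N => xx N / Real.tan (xx N)) Filter.atTop (𝓝 1) := by
    have := htan.inv₀ (by norm_num)
    simp only [inv_one] at this
    refine this.congr (fun N => ?_)
    rw [inv_div]
  have := hinv.const_mul (12 * (2 - Real.sqrt 3) / Real.pi)
  rw [mul_one] at this
  exact this
end

section
/- For every nonzero real number z, the sequence of partial products N ↦ ∏_{k=0}^{N-1} cos(2^{-k-1}·z) converges, as N → ∞, to sin(z)/z. -/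
open Real Finset Filter Topology

theorem euler_cos_product (z : ℝ) (hz : z ≠ 0) :
    Filter.Tendsto
      (fun N : ℕ => ∏ k ∈ Finset.range N, Real.cos ((2 : ℝ) ^ (-(k : ℤ) - 1) * z))
      Filter.atTop (𝓝 (Real.sin z / z)) := by
  set P : ℕ → ℝ := fun N => ∏ k ∈ Finset.range N, Real.cos ((2 : ℝ) ^ (-(k : ℤ) - 1) * z)
  set f : ℕ → ℝ := fun N => 2 ^ N * Real.sin (z / 2 ^ N) with hf
  have key : ∀ N, f N * P N = Real.sin z := by
    intro N
    induction N with
    | zero => simp [f, P]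
    | succ n ih =>
      have h1 : P (n + 1) = P n * Real.cos ((2 : ℝ) ^ (-(n : ℤ) - 1) * z) := by
        simp [P, Finset.prod_range_succ]
      have h2 : (2 : ℝ) ^ (-(n : ℤ) - 1) * z = z / 2 ^ (n + 1) := by
        rw [zpow_sub₀ (by norm_num), zpow_neg, zpow_natCast]
        field_simp
        ring
      have h3 : Real.sin (z / 2 ^ n) =
          2 * Real.sin (z / 2 ^ (n + 1)) * Real.cos (z / 2 ^ (n + 1)) := by
        rw [← Real.sin_two_mul]
        congr 1
        field_simp
        ring
      rw [h1, h2]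
      calc f (n + 1) * (P n * Real.cos (z / 2 ^ (n + 1)))
          = 2 ^ n * (2 * Real.sin (z / 2 ^ (n + 1)) * Real.cos (z / 2 ^ (n + 1))) * P n := by
            simp only [f]; ring
        _ = f n * P n := by rw [← h3]
        _ = Real.sin z := ih
  have hg : Tendsto (fun N : ℕ => z / 2 ^ N) atTop (𝓝[≠] (0 : ℝ)) := by
    apply tendsto_nhdsWithin_of_tendsto_nhds_of_eventually_within
    · have : Tendsto (fun N : ℕ => ((2 : ℝ) ^ N)⁻¹) atTop (𝓝 0) := by
        apply tendsto_inv_atTop_zero.comp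
        exact tendsto_pow_atTop_atTop_of_one_lt (by norm_num)
      simpa [div_eq_mul_inv] using this.const_mul z
    · filter_upwards with N
      simp [div_eq_mul_inv, hz, (pow_ne_zero N (two_ne_zero (α := ℝ)))]
  have hslope : Tendsto (fun x : ℝ => Real.sin x / x) (𝓝[≠] (0 : ℝ)) (𝓝 1) := by
    have := (hasDerivAt_iff_tendsto_slope).1 (Real.hasDerivAt_sin 0)
    simp only [Real.cos_zero] at this
    refine this.congr' ?_
    filter_upwards [self_mem_nhdsWithin] with x hx
    simp [slope, hx, inv_mul_eq_div]
  have hfz : Tendsto f atTop (𝓝 z) := by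
    have := (hslope.comp hg).const_mul z
    rw [mul_one] at this
    refine this.congr' ?_
    filter_upwards with N
    have h2N : (2 : ℝ) ^ N ≠ 0 := pow_ne_zero N two_ne_zero
    simp only [Function.comp, f]
    field_simp
  have hev : ∀ᶠ N in atTop, f N ≠ 0 := hfz.eventually_ne hz
  have : Tendsto (fun N => Real.sin z / f N) atTop (𝓝 (Real.sin z / z)) :=
    tendsto_const_nhds.div hfz hz
  refine this.congr' ?_
  filter_upwards [hev] with N hN
  rw [← key N]
  field_simp
end

section
/- The sequence of partial products N ↦ ∏_{k=0}^{N-1} cos(π·2^{-k-2}) converges, as N → ∞, to 2/π. -/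
open Real Finset Filter Topology

lemma viete_aux (N : ℕ) :
    (∏ k ∈ Finset.range N, Real.cos (Real.pi * (2 : ℝ) ^ (-(k : ℤ) - 2))) *
      (2 ^ N * Real.sin (Real.pi * (2 : ℝ) ^ (-(N : ℤ) - 1))) = 1 := by
  induction N with
  | zero =>
    simp only [Finset.prod_range_zero, pow_zero, one_mul, Nat.cast_zero, neg_zero, zero_sub]
    rw [show Real.pi * (2:ℝ) ^ (-1:ℤ) = Real.pi / 2 by norm_num [mul_one_div], Real.sin_pi_div_two]
  | succ n ih =>
    rw [Finset.prod_range_succ]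
    have key : (2:ℝ) ^ (n+1) * Real.sin (Real.pi * (2 : ℝ) ^ (-((n+1 : ℕ) : ℤ) - 1)) *
        Real.cos (Real.pi * (2 : ℝ) ^ (-(n : ℤ) - 2)) =
        2 ^ n * Real.sin (Real.pi * (2 : ℝ) ^ (-(n : ℤ) - 1)) := by
      have h1 : (-((n+1 : ℕ) : ℤ) - 1) = (-(n:ℤ) - 2) := by push_cast; ring
      rw [h1]
      have hs := Real.sin_two_mul (Real.pi * (2 : ℝ) ^ (-(n : ℤ) - 2))
      have h2 : 2 * (Real.pi * (2 : ℝ) ^ (-(n : ℤ) - 2)) = Real.pi * (2:ℝ) ^ (-(n:ℤ) - 1) := by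
        rw [show (-(n:ℤ) - 1) = (-(n:ℤ) - 2) + 1 by ring, zpow_add₀ (two_ne_zero)]
        ring
      rw [h2] at hs
      rw [pow_succ, hs]
      ring
    calc (∏ k ∈ Finset.range n, Real.cos (Real.pi * (2 : ℝ) ^ (-(k : ℤ) - 2))) *
          Real.cos (Real.pi * (2 : ℝ) ^ (-(n : ℤ) - 2)) *
          (2 ^ (n+1) * Real.sin (Real.pi * (2 : ℝ) ^ (-((n+1:ℕ) : ℤ) - 1)))
        = (∏ k ∈ Finset.range n, Real.cos (Real.pi * (2 : ℝ) ^ (-(k : ℤ) - 2))) *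
          (2 ^ (n+1) * Real.sin (Real.pi * (2 : ℝ) ^ (-((n+1:ℕ) : ℤ) - 1)) *
          Real.cos (Real.pi * (2 : ℝ) ^ (-(n : ℤ) - 2))) := by ring
      _ = _ := by rw [key]; exact ih

theorem viete_formula :
    Filter.Tendsto
      (fun N : ℕ => ∏ k ∈ Finset.range N, Real.cos (Real.pi * (2 : ℝ) ^ (-(k : ℤ) - 2)))
      Filter.atTop (𝓝 (2 / Real.pi)) := by
  set t : ℕ → ℝ := fun N => Real.pi * (2 : ℝ) ^ (-(N : ℤ) - 1) with ht
  have htpos : ∀ N, 0 < t N := fun N =>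
    mul_pos Real.pi_pos (zpow_pos (by norm_num) _)
  have htlt : ∀ N, t N < Real.pi := by
    intro N
    have h : (2:ℝ) ^ (-(N : ℤ) - 1) < 1 := by
      apply zpow_lt_one_of_neg₀ (by norm_num) (by omega)
    calc t N < Real.pi * 1 := mul_lt_mul_of_pos_left h Real.pi_pos
      _ = Real.pi := mul_one _
  have hsinpos : ∀ N, 0 < Real.sin (t N) := fun N =>
    Real.sin_pos_of_pos_of_lt_pi (htpos N) (htlt N)
  have hP : ∀ N, (∏ k ∈ Finset.range N, Real.cos (Real.pi * (2 : ℝ) ^ (-(k : ℤ) - 2)))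
      = (2 / Real.pi) / (Real.sin (t N) / t N) := by
    intro N
    have h := viete_aux N
    have h2 : (2:ℝ) ^ N * t N = Real.pi / 2 := by
      simp only [ht]
      rw [show (-(N:ℤ) - 1) = -(N:ℤ) + (-1) by ring, zpow_add₀ (two_ne_zero),
        zpow_neg, zpow_natCast]
      field_simp
    have hsne := (hsinpos N).ne'
    have htne := (htpos N).ne'
    have hpine := Real.pi_ne_zero
    have hpow : (2:ℝ) ^ N ≠ 0 := by positivity
    have h' : (∏ k ∈ Finset.range N, Real.cos (Real.pi * (2 : ℝ) ^ (-(k : ℤ) - 2))) *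
        (2 ^ N * Real.sin (t N)) = 1 := h
    field_simp
    linear_combination (2 * t N) * h' -
      (2 * Real.sin (t N) * (∏ k ∈ Finset.range N, Real.cos (Real.pi * (2 : ℝ) ^ (-(k : ℤ) - 2)))) * h2
  simp only [hP]
  have ht0 : Tendsto t atTop (𝓝 0) := by
    have h1 : Tendsto (fun N : ℕ => ((1:ℝ)/2) ^ N) atTop (𝓝 0) :=
      tendsto_pow_atTop_nhds_zero_of_lt_one (by norm_num) (by norm_num)
    have h2 : ∀ N : ℕ, t N = (Real.pi / 2) * ((1:ℝ)/2) ^ N := by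
      intro N
      have e : ((1:ℝ)/2)^N = ((2:ℝ)^N)⁻¹ := by rw [one_div, inv_pow]
      simp only [ht, e]
      rw [show (-(N:ℤ) - 1) = -((N:ℤ) + 1) by ring, zpow_neg,
        zpow_add₀ (two_ne_zero), zpow_one, zpow_natCast, mul_inv]
      ring
    rw [funext h2]
    simpa using h1.const_mul (Real.pi / 2)
  have hslope : Tendsto (fun x : ℝ => Real.sin x / x) (𝓝[≠] 0) (𝓝 1) := by
    have hd := hasDerivAt_iff_tendsto_slope.mp (Real.hasDerivAt_sin 0)
    rw [Real.cos_zero] at hd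
    refine hd.congr' (Filter.Eventually.of_forall fun x => ?_)
    simp [slope_def_field]
  have ht0' : Tendsto t atTop (𝓝[≠] 0) :=
    tendsto_nhdsWithin_of_tendsto_nhds_of_eventually_within _ ht0
      (Filter.Eventually.of_forall fun N => (htpos N).ne')
  have hsin : Tendsto (fun N => Real.sin (t N) / t N) atTop (𝓝 1) :=
    hslope.comp ht0'
  have hfin := (tendsto_const_nhds :
    Tendsto (fun _ : ℕ => (2 / Real.pi : ℝ)) atTop _).div hsin one_ne_zero
  rw [div_one] at hfin
  exact hfin
end

section
/- Let q be an integer with q ≥ 2 and let z be a real number with 0 < z < π. Then the sequence of partial products N ↦ ∏_{k=0}^{N-1} sin(z·q^{-k}) / (q·sin(z·q^{-k-1})) converges, as N → ∞, to sin(z)/z. -/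
open Real Finset Filter Topology

theorem generalized_viete_sinc (q : ℤ) (hq : 2 ≤ q) (z : ℝ) (hz : 0 < z)
    (hz' : z < Real.pi) :
    Filter.Tendsto
      (fun N : ℕ => ∏ k ∈ Finset.range N,
        Real.sin (z * (q : ℝ) ^ (-(k : ℤ))) / ((q : ℝ) * Real.sin (z * (q : ℝ) ^ (-(k : ℤ) - 1))))
      Filter.atTop (𝓝 (Real.sin z / z)) := by
  have hq1 : (1 : ℝ) < (q : ℝ) := by exact_mod_cast lt_of_lt_of_le one_lt_two (by exact_mod_cast hq)
  have hq0 : (0 : ℝ) < (q : ℝ) := lt_trans one_pos hq1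
  -- the arguments z * q^(-n) lie in (0, π]
  have harg : ∀ n : ℤ, 0 ≤ n → 0 < z * (q : ℝ) ^ (-n) ∧ z * (q : ℝ) ^ (-n) ≤ z := by
    intro n hn
    have hpow : (0 : ℝ) < (q : ℝ) ^ (-n) := zpow_pos hq0 _
    constructor
    · positivity
    · have : (q : ℝ) ^ (-n) ≤ 1 := by
        apply zpow_le_one_of_nonpos₀ (le_of_lt hq1)
        omega
      nlinarith
  have hsinpos : ∀ n : ℤ, 0 ≤ n → 0 < Real.sin (z * (q : ℝ) ^ (-n)) := by
    intro n hn
    obtain ⟨h1, h2⟩ := harg n hn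
    exact Real.sin_pos_of_pos_of_lt_pi h1 (lt_of_le_of_lt h2 hz')
  -- telescoping
  have key : ∀ N : ℕ, (∏ k ∈ Finset.range N,
      Real.sin (z * (q : ℝ) ^ (-(k : ℤ))) / ((q : ℝ) * Real.sin (z * (q : ℝ) ^ (-(k : ℤ) - 1))))
      = Real.sin z / ((q : ℝ) ^ N * Real.sin (z * (q : ℝ) ^ (-(N : ℤ)))) := by
    intro N
    induction N with
    | zero => simp [(Real.sin_pos_of_pos_of_lt_pi hz hz').ne']
    | succ n ih =>
      rw [Finset.prod_range_succ, ih]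
      have h1 : Real.sin (z * (q : ℝ) ^ (-(n : ℤ))) ≠ 0 := (hsinpos n (by positivity)).ne'
      have h2 : Real.sin (z * (q : ℝ) ^ (-((n : ℕ) + 1 : ℕ) : ℤ)) ≠ 0 := by
        have := (hsinpos ((n : ℤ) + 1) (by positivity)).ne'
        rwa [show -((n : ℤ) + 1) = (-((n : ℕ) + 1 : ℕ) : ℤ) by push_cast; ring] at this
      have h3 : (-(n : ℤ) - 1) = -((n : ℕ) + 1 : ℕ) := by push_cast; ring
      rw [h3]
      have hqn : ((q : ℝ) ^ n) ≠ 0 := by positivity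
      rw [div_mul_div_comm, div_eq_div_iff
        (mul_ne_zero (mul_ne_zero hqn h1) (mul_ne_zero hq0.ne' h2))
        (mul_ne_zero (by positivity) h2)]
      ring
  simp only [key]
  -- limit of denominator: q^N * sin (z * q^(-N)) → z
  have hx : Tendsto (fun N : ℕ => z * (q : ℝ) ^ (-(N : ℤ))) atTop (𝓝[≠] 0) := by
    apply tendsto_nhdsWithin_of_tendsto_nhds_of_eventually_within
    · have : Tendsto (fun N : ℕ => ((q : ℝ)⁻¹) ^ N) atTop (𝓝 0) := by
        apply tendsto_pow_atTop_nhds_zero_of_lt_one (by positivity)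
        rw [inv_lt_one_iff₀]; right; exact hq1
      have := this.const_mul z
      simpa [zpow_neg, zpow_natCast, inv_pow] using this
    · filter_upwards with N
      have := (harg N (by positivity)).1
      simp only [Set.mem_compl_iff, Set.mem_singleton_iff]
      exact this.ne'
  have hslope : Tendsto (fun x : ℝ => Real.sin x / x) (𝓝[≠] 0) (𝓝 1) := by
    have h := (Real.hasDerivAt_sin 0)
    rw [hasDerivAt_iff_tendsto_slope] at h
    simp only [Real.cos_zero] at h
    refine h.congr' ?_
    filter_upwards [self_mem_nhdsWithin] with x hx'
    simp [slope_def_field, div_eq_div_iff]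
  have hden : Tendsto (fun N : ℕ => (q : ℝ) ^ N * Real.sin (z * (q : ℝ) ^ (-(N : ℤ)))) atTop (𝓝 z) := by
    have := (hslope.comp hx).const_mul z
    rw [mul_one] at this
    refine this.congr ?_
    intro N
    have hpow : ((q : ℝ) ^ (-(N : ℤ))) ≠ 0 := by positivity
    have hqn : ((q : ℝ) ^ N) ≠ 0 := by positivity
    simp only [Function.comp]
    rw [zpow_neg, zpow_natCast] at *
    field_simp
  have hz0 : z ≠ 0 := hz.ne'
  exact (tendsto_const_nhds.div hden hz0)
end
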